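/- arXiv:1604.08819 — 6 statements merged into one kernel-verified Lean document; each statement's English description precedes it below -/
import Mathlib

section
/- If c is an exact r-coloring of [N] with no rainbow 3-term arithmetic progression such that c(1) and c(N) are each used only once, then N is even. -/
/-- `c` restricted to `[n] = {1,…,n}` is an exact `r`-coloring: it maps `[n]` into
`{1,…,r}` and every color in `{1,…,r}` is used on `[n]`. -/
def ExactColoring (n r : ℕ) (c : ℕ → ℕ) : Prop :=
  (∀ x ∈ Finset.Icc 1 n, c x ∈ Finset.Icc 1 r) ∧
    ∀ j ∈ Finset.Icc 1 r, ∃ x ∈ Finset.Icc 1 n, c x = j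

/-- `[n]` contains a rainbow 3-term arithmetic progression under `c`. -/
def HasRainbowAP3 (n : ℕ) (c : ℕ → ℕ) : Prop :=
  ∃ a d : ℕ, 1 ≤ a ∧ 1 ≤ d ∧ a + 2 * d ≤ n ∧
    c a ≠ c (a + d) ∧ c a ≠ c (a + 2 * d) ∧ c (a + d) ≠ c (a + 2 * d)

/-- The anti-van der Waerden number `aw([n],3)`: the least `r` such that every exact
`r`-coloring of `[n]` contains a rainbow 3-AP. -/
noncomputable def aw (n : ℕ) : ℕ :=
  sInf {r | ∀ c : ℕ → ℕ, ExactColoring n r c → HasRainbowAP3 n c}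

/-- A coloring of `[n]` is unitary if some element of `[n]` is uniquely colored. -/
def UnitaryColoring (n : ℕ) (c : ℕ → ℕ) : Prop :=
  ∃ x ∈ Finset.Icc 1 n, ∀ y ∈ Finset.Icc 1 n, c y = c x → y = x

/-- The unitary anti-van der Waerden number `aw_u([n],3)`. -/
noncomputable def awU (n : ℕ) : ℕ :=
  sInf {r | ∀ c : ℕ → ℕ, ExactColoring n r c → UnitaryColoring n c → HasRainbowAP3 n c}

/-- An exact `r`-coloring of `ℤ_n`. -/
def ExactColoringZ (n r : ℕ) (c : ZMod n → ℕ) : Prop :=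
  (∀ x, c x ∈ Finset.Icc 1 r) ∧ ∀ j ∈ Finset.Icc 1 r, ∃ x, c x = j

/-- `ℤ_n` contains a rainbow 3-AP (three distinct elements, distinct colors) under `c`. -/
def HasRainbowAP3Z (n : ℕ) (c : ZMod n → ℕ) : Prop :=
  ∃ a d : ZMod n, d ≠ 0 ∧ a ≠ a + d ∧ a ≠ a + 2 * d ∧ a + d ≠ a + 2 * d ∧
    c a ≠ c (a + d) ∧ c a ≠ c (a + 2 * d) ∧ c (a + d) ≠ c (a + 2 * d)

/-- The anti-van der Waerden number `aw(ℤ_n,3)`. -/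
noncomputable def awZ (n : ℕ) : ℕ :=
  sInf {r | ∀ c : ZMod n → ℕ, ExactColoringZ n r c → HasRainbowAP3Z n c}

/-- A coloring `c` of `[N]` is special: `N = 7q+1`, the endpoints `1` and `N` are
uniquely colored, and there are colors `α`, `β` whose color classes are exactly
`{q+1, 2q+1, 4q+1}` and `{3q+1, 5q+1, 6q+1}`. -/
def SpecialColoring (N : ℕ) (c : ℕ → ℕ) : Prop :=
  ∃ q : ℕ, 1 ≤ q ∧ N = 7 * q + 1 ∧
    (∀ y ∈ Finset.Icc 1 N, c y = c 1 → y = 1) ∧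
    (∀ y ∈ Finset.Icc 1 N, c y = c N → y = N) ∧
    ∃ α β : ℕ,
      (Finset.Icc 1 N).filter (fun x => c x = α) = {q + 1, 2 * q + 1, 4 * q + 1} ∧
      (Finset.Icc 1 N).filter (fun x => c x = β) = {3 * q + 1, 5 * q + 1, 6 * q + 1}

/-- an exact rainbow-3-AP-free coloring of `[N]` with uniquely colored
endpoints forces `N` even. -/
theorem stmt1 (N r : ℕ) (c : ℕ → ℕ) (hN : 2 ≤ N)
    (hc : ExactColoring N r c) (hnr : ¬ HasRainbowAP3 N c)
    (h1 : ∀ y ∈ Finset.Icc 1 N, c y = c 1 → y = 1)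
    (hNu : ∀ y ∈ Finset.Icc 1 N, c y = c N → y = N) :
    Even N := by
  by_contra hodd
  rw [Nat.not_even_iff_odd] at hodd
  obtain ⟨k, hk⟩ := hodd
  have hk1 : 1 ≤ k := by omega
  apply hnr
  refine ⟨1, k, le_refl _, hk1, by omega, ?_, ?_, ?_⟩
  · intro h
    have := h1 (1 + k) (by simp [Finset.mem_Icc]; omega) h.symm
    omega
  · intro h
    have := h1 (1 + 2 * k) (by simp [Finset.mem_Icc]; omega) h.symm
    omega
  · intro h
    have h2 : (1 + 2 * k) = N := by omega
    rw [h2] at h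
    have := hNu (1 + k) (by simp [Finset.mem_Icc]; omega) h
    omega
end

section
/- Let c be an exact r-coloring of [N] with no rainbow 3-AP in which 1 and N are uniquely colored. Then every color other than c(1) and c(N) is used on the subinterval I₂ = {⌈N/4⌉+1, ..., N/2} (using that N is even). -/
/-- every color other than `c 1` and `c N` is used on
`I₂ = {⌈N/4⌉+1, …, N/2}` (with `N` even). -/
theorem stmt2 (N r : ℕ) (c : ℕ → ℕ) (hN : 1 ≤ N) (hNe : Even N)
    (hc : ExactColoring N r c) (hnr : ¬ HasRainbowAP3 N c)
    (h1 : ∀ y ∈ Finset.Icc 1 N, c y = c 1 → y = 1)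
    (hNu : ∀ y ∈ Finset.Icc 1 N, c y = c N → y = N) :
    ∀ j ∈ Finset.Icc 1 r, j ≠ c 1 → j ≠ c N →
      ∃ x ∈ Finset.Icc ((N + 3) / 4 + 1) (N / 2), c x = j := by
  intro j hj hj1 hjN
  have hNe2 : N % 2 = 0 := Nat.even_iff.mp hNe
  obtain ⟨x, hx, hcx⟩ := hc.2 j hj
  rw [Finset.mem_Icc] at hx
  have hx1 : x ≠ 1 := by rintro rfl; exact hj1 hcx.symm
  -- Lemma A: pull the color into [2, N/2]
  have lemA : ∀ x, x ≤ N → 2 ≤ x → c x = j → ∃ y, 2 ≤ y ∧ y ≤ N / 2 ∧ c y = j := by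
    intro x
    induction x using Nat.strong_induction_on with
    | _ x ih =>
      intro hxN hx2 hcx
      by_cases h : x ≤ N / 2
      · exact ⟨x, hx2, h, hcx⟩
      · push_neg at h
        have hxne : x ≠ N := by rintro rfl; exact hjN hcx.symm
        have hca : c (2 * x - N) = j := by
          by_contra hne
          apply hnr
          refine ⟨2 * x - N, N - x, by omega, by omega, by omega, ?_, ?_, ?_⟩
          · have e1 : 2 * x - N + (N - x) = x := by omega
            rw [e1, hcx]
            exact fun h => hne h
          · have e2 : 2 * x - N + 2 * (N - x) = N := by omega
            rw [e2]
            intro hh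
            have := hNu (2 * x - N) (by rw [Finset.mem_Icc]; omega) hh
            omega
          · have e1 : 2 * x - N + (N - x) = x := by omega
            have e2 : 2 * x - N + 2 * (N - x) = N := by omega
            rw [e1, e2, hcx]
            exact hjN
        exact ih (2 * x - N) (by omega) (by omega) (by omega) hca
  -- Lemma B: push the color into ((N+3)/4, N/2]
  have lemB : ∀ k x, N / 2 - x ≤ k → 2 ≤ x → x ≤ N / 2 → c x = j →
      ∃ y, (N + 3) / 4 + 1 ≤ y ∧ y ≤ N / 2 ∧ c y = j := by
    intro k
    induction k with
    | zero =>
      intro x hk h2 hxh hcx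
      exact ⟨x, by omega, hxh, hcx⟩
    | succ k ih =>
      intro x hk h2 hxh hcx
      by_cases hbig : (N + 3) / 4 + 1 ≤ x
      · exact ⟨x, hbig, hxh, hcx⟩
      · push_neg at hbig
        have hy : c (2 * x - 1) = j := by
          by_contra hne
          apply hnr
          refine ⟨1, x - 1, le_refl 1, by omega, by omega, ?_, ?_, ?_⟩
          · have e1 : 1 + (x - 1) = x := by omega
            rw [e1, hcx]
            exact fun h => hj1 h.symm
          · have e2 : 1 + 2 * (x - 1) = 2 * x - 1 := by omega
            rw [e2]
            intro hh
            have := h1 (2 * x - 1) (by rw [Finset.mem_Icc]; omega) hh.symm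
            omega
          · have e1 : 1 + (x - 1) = x := by omega
            have e2 : 1 + 2 * (x - 1) = 2 * x - 1 := by omega
            rw [e1, e2, hcx]
            exact fun h => hne h.symm
        exact ih (2 * x - 1) (by omega) (by omega) (by omega) hy
  obtain ⟨y, hy2, hyh, hcy⟩ := lemA x hx.2 (by omega) hcx
  obtain ⟨z, hz1, hz2, hcz⟩ := lemB (N / 2) y (by omega) hy2 hyh hcy
  exact ⟨z, Finset.mem_Icc.mpr ⟨hz1, hz2⟩, hcz⟩
end

section
/- Every 4-coloring of a 9-term arithmetic progression inside [n], under a coloring of [n] with no rainbow 3-AP, is impossible when all 4 colors appear on the 9-AP: explicitly, since aw([9],3) = 4, any exact 4-coloring of a 9-term arithmetic progression contains three of its terms forming a rainbow 3-AP. -/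
namespace AW9

def rb3 (a b c : ℕ) : Bool := !(a == b) && !(a == c) && !(b == c)

def L8 (c0 c1 c2 c3 c4 c5 c6 c7 c8 : ℕ) : Bool :=
  rb3 c6 c7 c8 || rb3 c4 c6 c8 || rb3 c2 c5 c8 || rb3 c0 c4 c8 ||
  !((c0 == 0 || c1 == 0 || c2 == 0 || c3 == 0 || c4 == 0 || c5 == 0 || c6 == 0 || c7 == 0 || c8 == 0) &&
    (c0 == 1 || c1 == 1 || c2 == 1 || c3 == 1 || c4 == 1 || c5 == 1 || c6 == 1 || c7 == 1 || c8 == 1) &&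
    (c0 == 2 || c1 == 2 || c2 == 2 || c3 == 2 || c4 == 2 || c5 == 2 || c6 == 2 || c7 == 2 || c8 == 2) &&
    (c0 == 3 || c1 == 3 || c2 == 3 || c3 == 3 || c4 == 3 || c5 == 3 || c6 == 3 || c7 == 3 || c8 == 3))

def L7 (c0 c1 c2 c3 c4 c5 c6 c7 : ℕ) : Bool :=
  rb3 c5 c6 c7 || rb3 c3 c5 c7 || rb3 c1 c4 c7 ||
  (L8 c0 c1 c2 c3 c4 c5 c6 c7 0 && L8 c0 c1 c2 c3 c4 c5 c6 c7 1 &&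
   L8 c0 c1 c2 c3 c4 c5 c6 c7 2 && L8 c0 c1 c2 c3 c4 c5 c6 c7 3)

def L6 (c0 c1 c2 c3 c4 c5 c6 : ℕ) : Bool :=
  rb3 c4 c5 c6 || rb3 c2 c4 c6 || rb3 c0 c3 c6 ||
  (L7 c0 c1 c2 c3 c4 c5 c6 0 && L7 c0 c1 c2 c3 c4 c5 c6 1 &&
   L7 c0 c1 c2 c3 c4 c5 c6 2 && L7 c0 c1 c2 c3 c4 c5 c6 3)

def L5 (c0 c1 c2 c3 c4 c5 : ℕ) : Bool :=
  rb3 c3 c4 c5 || rb3 c1 c3 c5 ||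
  (L6 c0 c1 c2 c3 c4 c5 0 && L6 c0 c1 c2 c3 c4 c5 1 &&
   L6 c0 c1 c2 c3 c4 c5 2 && L6 c0 c1 c2 c3 c4 c5 3)

def L4 (c0 c1 c2 c3 c4 : ℕ) : Bool :=
  rb3 c2 c3 c4 || rb3 c0 c2 c4 ||
  (L5 c0 c1 c2 c3 c4 0 && L5 c0 c1 c2 c3 c4 1 && L5 c0 c1 c2 c3 c4 2 && L5 c0 c1 c2 c3 c4 3)

def L3 (c0 c1 c2 c3 : ℕ) : Bool :=
  rb3 c1 c2 c3 ||
  (L4 c0 c1 c2 c3 0 && L4 c0 c1 c2 c3 1 && L4 c0 c1 c2 c3 2 && L4 c0 c1 c2 c3 3)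

def L2 (c0 c1 c2 : ℕ) : Bool :=
  rb3 c0 c1 c2 ||
  (L3 c0 c1 c2 0 && L3 c0 c1 c2 1 && L3 c0 c1 c2 2 && L3 c0 c1 c2 3)

def L1 (c0 c1 : ℕ) : Bool :=
  L2 c0 c1 0 && L2 c0 c1 1 && L2 c0 c1 2 && L2 c0 c1 3

def L0 (c0 : ℕ) : Bool :=
  L1 c0 0 && L1 c0 1 && L1 c0 2 && L1 c0 3

def top : Bool := L0 0 && L0 1 && L0 2 && L0 3

theorem top_true : top = true := by decide +kernel

/-- The target property: `v` (indexing the 9 terms) has a rainbow 3-AP of indices. -/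
def RP (v : ℕ → ℕ) : Prop :=
  ∃ i j k : ℕ, i < j ∧ j < k ∧ k ≤ 8 ∧ j - i = k - j ∧
    v i ≠ v j ∧ v i ≠ v k ∧ v j ≠ v k

theorem rb3_spec {a b c : ℕ} (h : rb3 a b c = true) : a ≠ b ∧ a ≠ c ∧ b ≠ c := by
  simpa [rb3, and_assoc] using h

theorem sound8 (v : ℕ → ℕ)
    (h : L8 (v 0) (v 1) (v 2) (v 3) (v 4) (v 5) (v 6) (v 7) (v 8) = true)
    (hs : ∀ j < 4, ∃ i, i ≤ 8 ∧ v i = j) : RP v := by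
  unfold L8 at h
  simp only [Bool.or_eq_true] at h
  rcases h with ((((h|h)|h)|h)|h)
  · obtain ⟨x, y, z⟩ := rb3_spec h
    exact ⟨6, 7, 8, by omega, by omega, by omega, by omega, x, y, z⟩
  · obtain ⟨x, y, z⟩ := rb3_spec h
    exact ⟨4, 6, 8, by omega, by omega, by omega, by omega, x, y, z⟩
  · obtain ⟨x, y, z⟩ := rb3_spec h
    exact ⟨2, 5, 8, by omega, by omega, by omega, by omega, x, y, z⟩
  · obtain ⟨x, y, z⟩ := rb3_spec h
    exact ⟨0, 4, 8, by omega, by omega, by omega, by omega, x, y, z⟩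
  · exfalso
    have key : ∀ j, j < 4 →
        (v 0 == j || v 1 == j || v 2 == j || v 3 == j || v 4 == j || v 5 == j ||
          v 6 == j || v 7 == j || v 8 == j) = true := by
      intro j hj
      obtain ⟨i, hi, hv⟩ := hs j hj
      interval_cases i <;> simp [hv]
    rw [key 0 (by norm_num), key 1 (by norm_num), key 2 (by norm_num),
      key 3 (by norm_num)] at h
    simp at h

theorem sound7 (v : ℕ → ℕ) (hb : ∀ i, i ≤ 8 → v i < 4)
    (h : L7 (v 0) (v 1) (v 2) (v 3) (v 4) (v 5) (v 6) (v 7) = true)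
    (hs : ∀ j < 4, ∃ i, i ≤ 8 ∧ v i = j) : RP v := by
  unfold L7 at h
  simp only [Bool.or_eq_true, Bool.and_eq_true] at h
  rcases h with ((h|h)|h)|⟨⟨⟨h0, h1⟩, h2⟩, h3⟩
  · obtain ⟨x, y, z⟩ := rb3_spec h
    exact ⟨5, 6, 7, by omega, by omega, by omega, by omega, x, y, z⟩
  · obtain ⟨x, y, z⟩ := rb3_spec h
    exact ⟨3, 5, 7, by omega, by omega, by omega, by omega, x, y, z⟩
  · obtain ⟨x, y, z⟩ := rb3_spec h
    exact ⟨1, 4, 7, by omega, by omega, by omega, by omega, x, y, z⟩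
  · have := hb 8 (by norm_num)
    have h4 : v 8 = 0 ∨ v 8 = 1 ∨ v 8 = 2 ∨ v 8 = 3 := by omega
    rcases h4 with e|e|e|e
    · exact sound8 v (by rw [e]; exact h0) hs
    · exact sound8 v (by rw [e]; exact h1) hs
    · exact sound8 v (by rw [e]; exact h2) hs
    · exact sound8 v (by rw [e]; exact h3) hs

theorem sound6 (v : ℕ → ℕ) (hb : ∀ i, i ≤ 8 → v i < 4)
    (h : L6 (v 0) (v 1) (v 2) (v 3) (v 4) (v 5) (v 6) = true)
    (hs : ∀ j < 4, ∃ i, i ≤ 8 ∧ v i = j) : RP v := by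
  unfold L6 at h
  simp only [Bool.or_eq_true, Bool.and_eq_true] at h
  rcases h with ((h|h)|h)|⟨⟨⟨h0, h1⟩, h2⟩, h3⟩
  · obtain ⟨x, y, z⟩ := rb3_spec h
    exact ⟨4, 5, 6, by omega, by omega, by omega, by omega, x, y, z⟩
  · obtain ⟨x, y, z⟩ := rb3_spec h
    exact ⟨2, 4, 6, by omega, by omega, by omega, by omega, x, y, z⟩
  · obtain ⟨x, y, z⟩ := rb3_spec h
    exact ⟨0, 3, 6, by omega, by omega, by omega, by omega, x, y, z⟩
  · have := hb 7 (by norm_num)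
    have h4 : v 7 = 0 ∨ v 7 = 1 ∨ v 7 = 2 ∨ v 7 = 3 := by omega
    rcases h4 with e|e|e|e
    · exact sound7 v hb (by rw [e]; exact h0) hs
    · exact sound7 v hb (by rw [e]; exact h1) hs
    · exact sound7 v hb (by rw [e]; exact h2) hs
    · exact sound7 v hb (by rw [e]; exact h3) hs

theorem sound5 (v : ℕ → ℕ) (hb : ∀ i, i ≤ 8 → v i < 4)
    (h : L5 (v 0) (v 1) (v 2) (v 3) (v 4) (v 5) = true)
    (hs : ∀ j < 4, ∃ i, i ≤ 8 ∧ v i = j) : RP v := by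
  unfold L5 at h
  simp only [Bool.or_eq_true, Bool.and_eq_true] at h
  rcases h with (h|h)|⟨⟨⟨h0, h1⟩, h2⟩, h3⟩
  · obtain ⟨x, y, z⟩ := rb3_spec h
    exact ⟨3, 4, 5, by omega, by omega, by omega, by omega, x, y, z⟩
  · obtain ⟨x, y, z⟩ := rb3_spec h
    exact ⟨1, 3, 5, by omega, by omega, by omega, by omega, x, y, z⟩
  · have := hb 6 (by norm_num)
    have h4 : v 6 = 0 ∨ v 6 = 1 ∨ v 6 = 2 ∨ v 6 = 3 := by omega
    rcases h4 with e|e|e|e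
    · exact sound6 v hb (by rw [e]; exact h0) hs
    · exact sound6 v hb (by rw [e]; exact h1) hs
    · exact sound6 v hb (by rw [e]; exact h2) hs
    · exact sound6 v hb (by rw [e]; exact h3) hs

theorem sound4 (v : ℕ → ℕ) (hb : ∀ i, i ≤ 8 → v i < 4)
    (h : L4 (v 0) (v 1) (v 2) (v 3) (v 4) = true)
    (hs : ∀ j < 4, ∃ i, i ≤ 8 ∧ v i = j) : RP v := by
  unfold L4 at h
  simp only [Bool.or_eq_true, Bool.and_eq_true] at h
  rcases h with (h|h)|⟨⟨⟨h0, h1⟩, h2⟩, h3⟩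
  · obtain ⟨x, y, z⟩ := rb3_spec h
    exact ⟨2, 3, 4, by omega, by omega, by omega, by omega, x, y, z⟩
  · obtain ⟨x, y, z⟩ := rb3_spec h
    exact ⟨0, 2, 4, by omega, by omega, by omega, by omega, x, y, z⟩
  · have := hb 5 (by norm_num)
    have h4 : v 5 = 0 ∨ v 5 = 1 ∨ v 5 = 2 ∨ v 5 = 3 := by omega
    rcases h4 with e|e|e|e
    · exact sound5 v hb (by rw [e]; exact h0) hs
    · exact sound5 v hb (by rw [e]; exact h1) hs
    · exact sound5 v hb (by rw [e]; exact h2) hs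
    · exact sound5 v hb (by rw [e]; exact h3) hs

theorem sound3 (v : ℕ → ℕ) (hb : ∀ i, i ≤ 8 → v i < 4)
    (h : L3 (v 0) (v 1) (v 2) (v 3) = true)
    (hs : ∀ j < 4, ∃ i, i ≤ 8 ∧ v i = j) : RP v := by
  unfold L3 at h
  simp only [Bool.or_eq_true, Bool.and_eq_true] at h
  rcases h with h|⟨⟨⟨h0, h1⟩, h2⟩, h3⟩
  · obtain ⟨x, y, z⟩ := rb3_spec h
    exact ⟨1, 2, 3, by omega, by omega, by omega, by omega, x, y, z⟩
  · have := hb 4 (by norm_num)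
    have h4 : v 4 = 0 ∨ v 4 = 1 ∨ v 4 = 2 ∨ v 4 = 3 := by omega
    rcases h4 with e|e|e|e
    · exact sound4 v hb (by rw [e]; exact h0) hs
    · exact sound4 v hb (by rw [e]; exact h1) hs
    · exact sound4 v hb (by rw [e]; exact h2) hs
    · exact sound4 v hb (by rw [e]; exact h3) hs

theorem sound2 (v : ℕ → ℕ) (hb : ∀ i, i ≤ 8 → v i < 4)
    (h : L2 (v 0) (v 1) (v 2) = true)
    (hs : ∀ j < 4, ∃ i, i ≤ 8 ∧ v i = j) : RP v := by
  unfold L2 at h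
  simp only [Bool.or_eq_true, Bool.and_eq_true] at h
  rcases h with h|⟨⟨⟨h0, h1⟩, h2⟩, h3⟩
  · obtain ⟨x, y, z⟩ := rb3_spec h
    exact ⟨0, 1, 2, by omega, by omega, by omega, by omega, x, y, z⟩
  · have := hb 3 (by norm_num)
    have h4 : v 3 = 0 ∨ v 3 = 1 ∨ v 3 = 2 ∨ v 3 = 3 := by omega
    rcases h4 with e|e|e|e
    · exact sound3 v hb (by rw [e]; exact h0) hs
    · exact sound3 v hb (by rw [e]; exact h1) hs
    · exact sound3 v hb (by rw [e]; exact h2) hs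
    · exact sound3 v hb (by rw [e]; exact h3) hs

theorem sound1 (v : ℕ → ℕ) (hb : ∀ i, i ≤ 8 → v i < 4)
    (h : L1 (v 0) (v 1) = true)
    (hs : ∀ j < 4, ∃ i, i ≤ 8 ∧ v i = j) : RP v := by
  unfold L1 at h
  simp only [Bool.and_eq_true] at h
  obtain ⟨⟨⟨h0, h1⟩, h2⟩, h3⟩ := h
  have := hb 2 (by norm_num)
  have h4 : v 2 = 0 ∨ v 2 = 1 ∨ v 2 = 2 ∨ v 2 = 3 := by omega
  rcases h4 with e|e|e|e
  · exact sound2 v hb (by rw [e]; exact h0) hs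
  · exact sound2 v hb (by rw [e]; exact h1) hs
  · exact sound2 v hb (by rw [e]; exact h2) hs
  · exact sound2 v hb (by rw [e]; exact h3) hs

theorem sound0 (v : ℕ → ℕ) (hb : ∀ i, i ≤ 8 → v i < 4)
    (h : L0 (v 0) = true)
    (hs : ∀ j < 4, ∃ i, i ≤ 8 ∧ v i = j) : RP v := by
  unfold L0 at h
  simp only [Bool.and_eq_true] at h
  obtain ⟨⟨⟨h0, h1⟩, h2⟩, h3⟩ := h
  have := hb 1 (by norm_num)
  have h4 : v 1 = 0 ∨ v 1 = 1 ∨ v 1 = 2 ∨ v 1 = 3 := by omega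
  rcases h4 with e|e|e|e
  · exact sound1 v hb (by rw [e]; exact h0) hs
  · exact sound1 v hb (by rw [e]; exact h1) hs
  · exact sound1 v hb (by rw [e]; exact h2) hs
  · exact sound1 v hb (by rw [e]; exact h3) hs

theorem main (v : ℕ → ℕ) (hb : ∀ i, i ≤ 8 → v i < 4)
    (hs : ∀ j < 4, ∃ i, i ≤ 8 ∧ v i = j) : RP v := by
  have h := top_true
  unfold top at h
  simp only [Bool.and_eq_true] at h
  obtain ⟨⟨⟨h0, h1⟩, h2⟩, h3⟩ := h
  have := hb 0 (by norm_num)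
  have h4 : v 0 = 0 ∨ v 0 = 1 ∨ v 0 = 2 ∨ v 0 = 3 := by omega
  rcases h4 with e|e|e|e
  · exact sound0 v hb (by rw [e]; exact h0) hs
  · exact sound0 v hb (by rw [e]; exact h1) hs
  · exact sound0 v hb (by rw [e]; exact h2) hs
  · exact sound0 v hb (by rw [e]; exact h3) hs

end AW9

/-- any coloring using exactly 4 colors on a 9-term arithmetic
progression in `[n]` contains three of its terms, in arithmetic progression, that are
rainbow (pairwise distinctly colored). -/
theorem stmt12 (n a d : ℕ) (c : ℕ → ℕ) (ha : 1 ≤ a) (hd : 1 ≤ d) (h8 : a + 8 * d ≤ n)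
    (h4 : ((Finset.range 9).image fun i => c (a + i * d)).card = 4) :
    ∃ i j k : ℕ, i < j ∧ j < k ∧ k ≤ 8 ∧ j - i = k - j ∧
      c (a + i * d) ≠ c (a + j * d) ∧ c (a + i * d) ≠ c (a + k * d) ∧
      c (a + j * d) ≠ c (a + k * d) := by
  classical
  set s := (Finset.range 9).image fun i => c (a + i * d) with hs
  have e := s.equivFinOfCardEq h4
  have hmem : ∀ i : ℕ, i < 9 → c (a + i * d) ∈ s := by
    intro i hi
    exact Finset.mem_image.2 ⟨i, Finset.mem_range.2 hi, rfl⟩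
  set v : ℕ → ℕ := fun i => if h : i < 9 then (e ⟨c (a + i * d), hmem i h⟩ : Fin 4).val else 0
    with hv
  have hvv : ∀ i (h9 : i < 9), v i = (e ⟨c (a + i * d), hmem i h9⟩ : Fin 4).val := by
    intro i h9; simp [hv, h9]
  have hb : ∀ i, i ≤ 8 → v i < 4 := by
    intro i hi
    rw [hvv i (by omega)]
    exact (e _).isLt
  have hsurj : ∀ j < 4, ∃ i, i ≤ 8 ∧ v i = j := by
    intro j hj
    obtain ⟨i, hi, hix⟩ := Finset.mem_image.1 (e.symm ⟨j, hj⟩).2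
    have hi9 := Finset.mem_range.1 hi
    refine ⟨i, by omega, ?_⟩
    rw [hvv i hi9]
    have : (⟨c (a + i * d), hmem i hi9⟩ : s) = e.symm ⟨j, hj⟩ := Subtype.ext hix
    rw [this, Equiv.apply_symm_apply]
  obtain ⟨i, j, k, hij, hjk, hk8, hap, h1, h2, h3⟩ := AW9.main v hb hsurj
  have hne : ∀ p q : ℕ, (hp : p < 9) → (hq : q < 9) → v p ≠ v q →
      c (a + p * d) ≠ c (a + q * d) := by
    intro p q hp hq hpq hc
    apply hpq
    rw [hvv p hp, hvv q hq]
    exact congrArg Fin.val (congrArg e (Subtype.ext hc))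
  exact ⟨i, j, k, hij, hjk, hk8, hap,
    hne i j (by omega) (by omega) h1, hne i k (by omega) (by omega) h2,
    hne j k (by omega) (by omega) h3⟩
end

section
/- Let c be an exact r-coloring of [N] with no rainbow 3-AP in which 1 and N are uniquely colored, and suppose N ≡ 1 (mod 3). Then the set of colors appearing on {x ∈ [N] : x ≡ 1 (mod 3)} has size at least r − 1. -/
section Aux

variable (N M : ℕ) (c : ℕ → ℕ)

/-- Doubling from the left endpoint 1. -/
lemma lemA (hN : N = M + 1) (hnr : ¬ HasRainbowAP3 N c)
    (h1 : ∀ y ∈ Finset.Icc 1 N, c y = c 1 → y = 1)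
    (t : ℕ) (ht1 : 1 ≤ t) (h2t : 2 * t ≤ M) :
    c (2 * t + 1) = c (t + 1) := by
  by_contra hne
  apply hnr
  refine ⟨1, t, le_rfl, ht1, by omega, ?_, ?_, ?_⟩
  · intro he
    have := h1 (1 + t) (Finset.mem_Icc.mpr (by omega)) he.symm
    omega
  · intro he
    have := h1 (1 + 2 * t) (Finset.mem_Icc.mpr (by omega)) he.symm
    omega
  · rw [show 1 + t = t + 1 by omega, show 1 + 2 * t = 2 * t + 1 by omega]
    exact fun e => hne e.symm

/-- Doubling from the right endpoint N. -/
lemma lemB (hN : N = M + 1) (hnr : ¬ HasRainbowAP3 N c)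
    (hNu : ∀ y ∈ Finset.Icc 1 N, c y = c N → y = N)
    (t : ℕ) (hM2t : M < 2 * t) (htM : t + 1 ≤ M) :
    c (2 * t - M + 1) = c (t + 1) := by
  by_contra hne
  apply hnr
  refine ⟨2 * t - M + 1, M - t, by omega, by omega, by omega, ?_, ?_, ?_⟩
  · rw [show 2 * t - M + 1 + (M - t) = t + 1 by omega]
    exact hne
  · rw [show 2 * t - M + 1 + 2 * (M - t) = N by omega]
    intro he
    have := hNu (2 * t - M + 1) (Finset.mem_Icc.mpr (by omega)) he
    omega
  · rw [show 2 * t - M + 1 + (M - t) = t + 1 by omega,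
      show 2 * t - M + 1 + 2 * (M - t) = N by omega]
    intro he
    have := hNu (t + 1) (Finset.mem_Icc.mpr (by omega)) he
    omega

/-- Every nonzero (mod 3) residue reaches the middle third by doubling mod M. -/
lemma reach (hN : N = M + 1) (hModd : M % 2 = 1) (hM3 : M % 3 = 0)
    (hnr : ¬ HasRainbowAP3 N c)
    (h1 : ∀ y ∈ Finset.Icc 1 N, c y = c 1 → y = 1)
    (hNu : ∀ y ∈ Finset.Icc 1 N, c y = c N → y = N) :
    ∀ n t, (2 * M - 3 * t) + (3 * t - 2 * M) ≤ n → 1 ≤ t → t + 1 ≤ M → t % 3 ≠ 0 →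
      ∃ p, M < 3 * p ∧ 3 * p ≤ 2 * M ∧ p % 3 ≠ 0 ∧ c (p + 1) = c (t + 1) := by
  intro n
  induction n using Nat.strong_induction_on with
  | _ n ih =>
    intro t hm ht1 htM ht3
    by_cases hImid : M < 3 * t ∧ 3 * t ≤ 2 * M
    · exact ⟨t, hImid.1, hImid.2, ht3, rfl⟩
    by_cases hlow : 3 * t ≤ M
    · have hc2 : c (2 * t + 1) = c (t + 1) :=
        lemA N M c hN hnr h1 t ht1 (by omega)
      by_cases hI' : M < 3 * (2 * t)
      · exact ⟨2 * t, hI', by omega, by omega, hc2⟩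
      · obtain ⟨p, hp1, hp2, hp3, hp4⟩ :=
          ih ((2 * M - 3 * (2 * t)) + (3 * (2 * t) - 2 * M)) (by omega)
            (2 * t) le_rfl (by omega) (by omega) (by omega)
        exact ⟨p, hp1, hp2, hp3, hp4.trans hc2⟩
    · -- high: 2M < 3t
      have hhigh : 2 * M < 3 * t := by omega
      have hc2 : c (2 * t - M + 1) = c (t + 1) :=
        lemB N M c hN hnr hNu t (by omega) htM
      by_cases hI' : 3 * (2 * t - M) ≤ 2 * M
      · exact ⟨2 * t - M, by omega, hI', by omega, hc2⟩
      · obtain ⟨p, hp1, hp2, hp3, hp4⟩ :=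
          ih ((2 * M - 3 * (2 * t - M)) + (3 * (2 * t - M) - 2 * M)) (by omega)
            (2 * t - M) le_rfl (by omega) (by omega) (by omega)
        exact ⟨p, hp1, hp2, hp3, hp4.trans hc2⟩

/-- Core rainbow constructor: an AP through t-coordinates x, y whose third point is
≡ 0 mod 3 (position ≡ 1 mod 3), both of whose colors avoid positions ≡ 1 mod 3. -/
lemma core_rainbow (hN : N = M + 1)
    (x y : ℕ) (hxM : x ≤ M) (hy1 : 1 ≤ y) (hyM : y ≤ M)
    (hxy : x ≠ y) (hx2y : x ≤ 2 * y) (h2yM : 2 * y ≤ M + x)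
    (hz3 : (2 * y - x) % 3 = 0)
    (hcol : c (x + 1) ≠ c (y + 1))
    (hzx : ∀ w ∈ Finset.Icc 1 N, w % 3 = 1 → c w ≠ c (x + 1))
    (hzy : ∀ w ∈ Finset.Icc 1 N, w % 3 = 1 → c w ≠ c (y + 1)) :
    HasRainbowAP3 N c := by
  have hz1 : 2 * y - x + 1 ∈ Finset.Icc 1 N := Finset.mem_Icc.mpr (by omega)
  have hz31 : (2 * y - x + 1) % 3 = 1 := by omega
  have hne1 := hzx (2 * y - x + 1) hz1 hz31
  have hne2 := hzy (2 * y - x + 1) hz1 hz31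
  rcases lt_or_gt_of_ne hxy with h | h
  · refine ⟨x + 1, y - x, by omega, by omega, by omega, ?_, ?_, ?_⟩
    · rw [show x + 1 + (y - x) = y + 1 by omega]; exact hcol
    · rw [show x + 1 + 2 * (y - x) = 2 * y - x + 1 by omega]
      exact fun e => hne1 e.symm
    · rw [show x + 1 + (y - x) = y + 1 by omega,
        show x + 1 + 2 * (y - x) = 2 * y - x + 1 by omega]
      exact fun e => hne2 e.symm
  · refine ⟨2 * y - x + 1, x - y, by omega, by omega, by omega, ?_, ?_, ?_⟩
    · rw [show 2 * y - x + 1 + (x - y) = y + 1 by omega]; exact hne2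
    · rw [show 2 * y - x + 1 + 2 * (x - y) = x + 1 by omega]; exact hne1
    · rw [show 2 * y - x + 1 + (x - y) = y + 1 by omega,
        show 2 * y - x + 1 + 2 * (x - y) = x + 1 by omega]
      exact fun e => hcol e.symm

/-- Two distinct colors both living in the middle third, on positions ≢ 1 mod 3,
both avoiding the residue class 1 mod 3, is impossible. -/
lemma pairing (hN : N = M + 1) (hModd : M % 2 = 1) (hM3 : M % 3 = 0)
    (hnr : ¬ HasRainbowAP3 N c)
    (h1 : ∀ y ∈ Finset.Icc 1 N, c y = c 1 → y = 1)
    (hNu : ∀ y ∈ Finset.Icc 1 N, c y = c N → y = N)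
    (p q : ℕ) (hpI : M < 3 * p ∧ 3 * p ≤ 2 * M) (hqI : M < 3 * q ∧ 3 * q ≤ 2 * M)
    (hp3 : p % 3 ≠ 0) (hq3 : q % 3 ≠ 0)
    (hcol : c (p + 1) ≠ c (q + 1))
    (hconfp : ∀ w ∈ Finset.Icc 1 N, w % 3 = 1 → c w ≠ c (p + 1))
    (hconfq : ∀ w ∈ Finset.Icc 1 N, w % 3 = 1 → c w ≠ c (q + 1)) :
    False := by
  obtain ⟨hp1, hp2⟩ := hpI
  obtain ⟨hq1, hq2⟩ := hqI
  have hM3' : 3 ≤ M := by omega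
  by_cases hsame : p % 3 = q % 3
  · by_cases hqlow : 2 * q ≤ M
    · by_cases hpq : q ≤ p
      · -- x = 2q (color of q), y = p
        have hq' : c (2 * q + 1) = c (q + 1) :=
          lemA N M c hN hnr h1 q (by omega) hqlow
        apply hnr
        refine core_rainbow N M c hN (2 * q) p (by omega) (by omega) (by omega)
          (by omega) (by omega) (by omega) (by omega) ?_ ?_ hconfp
        · rw [hq']; exact fun e => hcol e.symm
        · intro w hw hw3; rw [hq']; exact hconfq w hw hw3
      · -- p < q, p also low: x = 2p, y = q
        have hp' : c (2 * p + 1) = c (p + 1) :=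
          lemA N M c hN hnr h1 p (by omega) (by omega)
        apply hnr
        refine core_rainbow N M c hN (2 * p) q (by omega) (by omega) (by omega)
          (by omega) (by omega) (by omega) (by omega) ?_ ?_ hconfq
        · rw [hp']; exact hcol
        · intro w hw hw3; rw [hp']; exact hconfp w hw hw3
    · by_cases hpq : p ≤ q
      · -- q high: x = 2q - M, y = p
        have hq' : c (2 * q - M + 1) = c (q + 1) :=
          lemB N M c hN hnr hNu q (by omega) (by omega)
        apply hnr
        refine core_rainbow N M c hN (2 * q - M) p (by omega) (by omega) (by omega)
          (by omega) (by omega) (by omega) (by omega) ?_ ?_ hconfp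
        · rw [hq']; exact fun e => hcol e.symm
        · intro w hw hw3; rw [hq']; exact hconfq w hw hw3
      · -- q < p, p also high: x = 2p - M, y = q
        have hp' : c (2 * p - M + 1) = c (p + 1) :=
          lemB N M c hN hnr hNu p (by omega) (by omega)
        apply hnr
        refine core_rainbow N M c hN (2 * p - M) q (by omega) (by omega) (by omega)
          (by omega) (by omega) (by omega) (by omega) ?_ ?_ hconfq
        · rw [hp']; exact hcol
        · intro w hw hw3; rw [hp']; exact hconfp w hw hw3
  · -- opposite classes: x = p, y = q
    apply hnr
    have hz : (2 * q - p) % 3 = 0 := by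
      have h1' : p % 3 = 1 ∨ p % 3 = 2 := by omega
      have h2' : q % 3 = 1 ∨ q % 3 = 2 := by omega
      rcases h1' with h1' | h1' <;> rcases h2' with h2' | h2' <;> omega
    exact core_rainbow N M c hN p q (by omega) (by omega) (by omega)
      (by omega) (by omega) (by omega) hz hcol hconfp hconfq

end Aux


/-- if `N ≡ 1 (mod 3)`, then at least `r - 1` colors appear on
`{x ∈ [N] : x ≡ 1 (mod 3)}`. -/
theorem stmt13 (N r : ℕ) (c : ℕ → ℕ) (hN : N % 3 = 1)
    (hc : ExactColoring N r c) (hnr : ¬ HasRainbowAP3 N c)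
    (h1 : ∀ y ∈ Finset.Icc 1 N, c y = c 1 → y = 1)
    (hNu : ∀ y ∈ Finset.Icc 1 N, c y = c N → y = N) :
    r - 1 ≤ (((Finset.Icc 1 N).filter fun x => x % 3 = 1).image c).card := by
  classical
  by_contra hcon
  push_neg at hcon
  set T := ((Finset.Icc 1 N).filter fun x => x % 3 = 1).image c with hT
  have hTsub : T ⊆ Finset.Icc 1 r := by
    intro a ha
    rw [hT, Finset.mem_image] at ha
    obtain ⟨x, hx, rfl⟩ := ha
    exact hc.1 x (Finset.mem_filter.mp hx).1
  have hcard : 1 < (Finset.Icc 1 r \ T).card := by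
    rw [Finset.card_sdiff_of_subset hTsub, Nat.card_Icc]
    omega
  obtain ⟨j, hjmem, k, hkmem, hjk⟩ := Finset.one_lt_card.mp hcard
  obtain ⟨hjr, hjT⟩ := Finset.mem_sdiff.mp hjmem
  obtain ⟨hkr, hkT⟩ := Finset.mem_sdiff.mp hkmem
  have hjconf : ∀ w ∈ Finset.Icc 1 N, w % 3 = 1 → c w ≠ j := by
    intro w hw hw3 he
    exact hjT (Finset.mem_image.mpr ⟨w, Finset.mem_filter.mpr ⟨hw, hw3⟩, he⟩)
  have hkconf : ∀ w ∈ Finset.Icc 1 N, w % 3 = 1 → c w ≠ k := by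
    intro w hw hw3 he
    exact hkT (Finset.mem_image.mpr ⟨w, Finset.mem_filter.mpr ⟨hw, hw3⟩, he⟩)
  obtain ⟨xj, hxjmem, hxj⟩ := hc.2 j hjr
  obtain ⟨xk, hxkmem, hxk⟩ := hc.2 k hkr
  have hxj3 : xj % 3 ≠ 1 := fun h => hjconf xj hxjmem h hxj
  have hxk3 : xk % 3 ≠ 1 := fun h => hkconf xk hxkmem h hxk
  rw [Finset.mem_Icc] at hxjmem hxkmem
  have hxjr : 2 ≤ xj ∧ xj + 1 ≤ N := by omega
  have hxkr : 2 ≤ xk ∧ xk + 1 ≤ N := by omega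
  have hN4 : 4 ≤ N := by omega
  -- N must be even
  have hNeven : N % 2 = 0 := by
    by_contra hodd
    apply hnr
    have hd : 1 + 2 * ((N - 1) / 2) = N := by omega
    refine ⟨1, (N - 1) / 2, le_rfl, by omega, by omega, ?_, ?_, ?_⟩
    · intro he
      have := h1 (1 + (N - 1) / 2) (Finset.mem_Icc.mpr (by omega)) he.symm
      omega
    · rw [hd]
      intro he
      have := h1 N (Finset.mem_Icc.mpr (by omega)) he.symm
      omega
    · rw [hd]
      intro he
      have := hNu (1 + (N - 1) / 2) (Finset.mem_Icc.mpr (by omega)) he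
      omega
  set M := N - 1 with hM
  have hNM : N = M + 1 := by omega
  have hModd : M % 2 = 1 := by omega
  have hM3 : M % 3 = 0 := by omega
  have hcj : c (xj - 1 + 1) = j := by rw [show xj - 1 + 1 = xj by omega]; exact hxj
  have hck : c (xk - 1 + 1) = k := by rw [show xk - 1 + 1 = xk by omega]; exact hxk
  obtain ⟨p, hp1, hp2, hp3, hp4⟩ :=
    reach N M c hNM hModd hM3 hnr h1 hNu
      ((2 * M - 3 * (xj - 1)) + (3 * (xj - 1) - 2 * M)) (xj - 1) le_rfl
      (by omega) (by omega) (by omega)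
  obtain ⟨q, hq1, hq2, hq3, hq4⟩ :=
    reach N M c hNM hModd hM3 hnr h1 hNu
      ((2 * M - 3 * (xk - 1)) + (3 * (xk - 1) - 2 * M)) (xk - 1) le_rfl
      (by omega) (by omega) (by omega)
  rw [hcj] at hp4
  rw [hck] at hq4
  exact pairing N M c hNM hModd hM3 hnr h1 hNu p q ⟨hp1, hp2⟩ ⟨hq1, hq2⟩ hp3 hq3
    (by rw [hp4, hq4]; exact hjk)
    (by rw [hp4]; exact hjconf) (by rw [hq4]; exact hkconf)
end

section
/- Let c be a coloring of [N] with no rainbow 3-AP that is special with N = 7q+1, 8-AP {1, r₁, r₂, b₁, r₃, b₂, b₃, N} where r₁ = q+1, r₂ = 2q+1, b₁ = 3q+1, r₃ = 4q+1, b₂ = 5q+1, b₃ = 6q+1. Then c(r₁ + i) = c(r₁ − i) for i = 1, ..., q−1. -/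
/-- mirror symmetry around `r₁ = q+1` in a special rainbow-free
coloring: `c (q+1+i) = c (q+1-i)` for `i = 1, …, q-1`. -/
theorem stmt14 (N q : ℕ) (c : ℕ → ℕ) (red blue : ℕ) (hq : 1 ≤ q) (hN : N = 7 * q + 1)
    (hnr : ¬ HasRainbowAP3 N c)
    (h1 : ∀ y ∈ Finset.Icc 1 N, c y = c 1 → y = 1)
    (hNu : ∀ y ∈ Finset.Icc 1 N, c y = c N → y = N)
    (hred : (Finset.Icc 1 N).filter (fun x => c x = red) = {q + 1, 2 * q + 1, 4 * q + 1})
    (hblue : (Finset.Icc 1 N).filter (fun x => c x = blue) = {3 * q + 1, 5 * q + 1, 6 * q + 1}) :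
    ∀ i : ℕ, 1 ≤ i → i ≤ q - 1 → c (q + 1 + i) = c (q + 1 - i) := by
  intro i hi1 hi2
  by_contra hne
  have hi' : i + 1 ≤ q := by omega
  have hm : q + 1 ∈ (Finset.Icc 1 N).filter (fun x => c x = red) := by
    rw [hred]; simp
  have hcr : c (q + 1) = red := (Finset.mem_filter.mp hm).2
  have notred : ∀ x, 1 ≤ x → x ≤ N → c x = red →
      x = q + 1 ∨ x = 2 * q + 1 ∨ x = 4 * q + 1 := by
    intro x hx1 hx2 hx
    have : x ∈ (Finset.Icc 1 N).filter (fun x => c x = red) :=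
      Finset.mem_filter.mpr ⟨Finset.mem_Icc.mpr ⟨hx1, hx2⟩, hx⟩
    rw [hred] at this
    simpa using this
  set a := q + 1 - i with ha
  have haeq : a + i = q + 1 := by omega
  have ha2 : a + 2 * i = q + 1 + i := by omega
  apply hnr
  refine ⟨a, i, by omega, hi1, by omega, ?_, ?_, ?_⟩
  · rw [haeq]
    intro h
    have := notred a (by omega) (by omega) (h.trans hcr)
    omega
  · rw [ha2]; exact fun h => hne h.symm
  · rw [haeq, ha2]
    intro h
    have := notred (q + 1 + i) (by omega) (by omega) (h.symm.trans hcr)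
    omega
end

section
/- Suppose c is a special rainbow-3-AP-free coloring of an interval of length N = 7q+1 contained in [n] containing all r colors of an exact r-coloring of [n] with no rainbow 3-AP. If n ≥ 9q, then [n] contains a rainbow 3-AP, a contradiction; hence n ≤ 9q − 1. -/
/-- if an exact rainbow-free `r`-coloring of `[n]` is special on an
interval `{n₁, …, n₁ + 7q}` containing all `r` colors, then `n ≤ 9q - 1`. -/
theorem stmt15 (n r q n₁ : ℕ) (c : ℕ → ℕ) (red blue : ℕ)
    (hq : 1 ≤ q) (hn₁ : 1 ≤ n₁) (hle : n₁ + 7 * q ≤ n)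
    (hc : ExactColoring n r c) (hnr : ¬ HasRainbowAP3 n c)
    (hall : ∀ j ∈ Finset.Icc 1 r, ∃ x ∈ Finset.Icc n₁ (n₁ + 7 * q), c x = j)
    (h1 : ∀ y ∈ Finset.Icc n₁ (n₁ + 7 * q), c y = c n₁ → y = n₁)
    (h2 : ∀ y ∈ Finset.Icc n₁ (n₁ + 7 * q), c y = c (n₁ + 7 * q) → y = n₁ + 7 * q)
    (hred : (Finset.Icc n₁ (n₁ + 7 * q)).filter (fun x => c x = red) =
      {n₁ + q, n₁ + 2 * q, n₁ + 4 * q})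
    (hblue : (Finset.Icc n₁ (n₁ + 7 * q)).filter (fun x => c x = blue) =
      {n₁ + 3 * q, n₁ + 5 * q, n₁ + 6 * q}) :
    n ≤ 9 * q - 1 := by
  by_contra hcon
  have hn9 : 9 * q ≤ n := by omega
  have credset : ∀ x ∈ Finset.Icc n₁ (n₁ + 7 * q),
      c x = red → (x = n₁ + q ∨ x = n₁ + 2 * q ∨ x = n₁ + 4 * q) := by
    intro x hx h
    have hm : x ∈ (Finset.Icc n₁ (n₁ + 7 * q)).filter (fun x => c x = red) :=
      Finset.mem_filter.mpr ⟨hx, h⟩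
    rw [hred] at hm
    simpa using hm
  have cblueset : ∀ x ∈ Finset.Icc n₁ (n₁ + 7 * q),
      c x = blue → (x = n₁ + 3 * q ∨ x = n₁ + 5 * q ∨ x = n₁ + 6 * q) := by
    intro x hx h
    have hm : x ∈ (Finset.Icc n₁ (n₁ + 7 * q)).filter (fun x => c x = blue) :=
      Finset.mem_filter.mpr ⟨hx, h⟩
    rw [hblue] at hm
    simpa using hm
  have credval : ∀ x ∈ ({n₁ + q, n₁ + 2 * q, n₁ + 4 * q} : Finset ℕ), c x = red := by
    intro x hx
    rw [← hred] at hx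
    exact (Finset.mem_filter.mp hx).2
  have cblueval : ∀ x ∈ ({n₁ + 3 * q, n₁ + 5 * q, n₁ + 6 * q} : Finset ℕ), c x = blue := by
    intro x hx
    rw [← hblue] at hx
    exact (Finset.mem_filter.mp hx).2
  have hr1 : c (n₁ + q) = red := credval _ (by simp)
  have hr2 : c (n₁ + 2 * q) = red := credval _ (by simp)
  have hr4 : c (n₁ + 4 * q) = red := credval _ (by simp)
  have hb3 : c (n₁ + 3 * q) = blue := cblueval _ (by simp)
  have hb5 : c (n₁ + 5 * q) = blue := cblueval _ (by simp)
  have hb6 : c (n₁ + 6 * q) = blue := cblueval _ (by simp)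
  have hmemIcc : ∀ k, k ≤ 7 * q → n₁ + k ∈ Finset.Icc n₁ (n₁ + 7 * q) := by
    intro k hk; simp [Finset.mem_Icc]; omega
  have hrb : red ≠ blue := by
    intro h
    have := cblueset (n₁ + q) (hmemIcc q (by omega)) (by rw [hr1, h])
    omega
  have hAr : c n₁ ≠ red := by
    intro h
    have := h1 (n₁ + q) (hmemIcc q (by omega)) (by rw [hr1, h])
    omega
  have hAb : c n₁ ≠ blue := by
    intro h
    have := h1 (n₁ + 3 * q) (hmemIcc (3 * q) (by omega)) (by rw [hb3, h])
    omega
  have hBr : c (n₁ + 7 * q) ≠ red := by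
    intro h
    have := h2 (n₁ + q) (hmemIcc q (by omega)) (by rw [hr1, h])
    omega
  have hBb : c (n₁ + 7 * q) ≠ blue := by
    intro h
    have := h2 (n₁ + 3 * q) (hmemIcc (3 * q) (by omega)) (by rw [hb3, h])
    omega
  apply hnr
  rcases Nat.lt_or_ge q n₁ with hcase | hcase
  · -- extend to the left: m = n₁ - q
    set m := n₁ - q with hm
    have e1 : m + q = n₁ := by omega
    have e3 : m + 3 * q = n₁ + 2 * q := by omega
    have e4 : m + 4 * q = n₁ + 3 * q := by omega
    have e6 : m + 2 * (3 * q) = n₁ + 5 * q := by omega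
    have e8 : m + 2 * (4 * q) = n₁ + 7 * q := by omega
    by_cases hx : c m = red
    · -- (m, n₁+3q, n₁+7q) : red, blue, B
      refine ⟨m, 4 * q, by omega, by omega, by omega, ?_, ?_, ?_⟩
      · rw [hx, e4, hb3]; exact hrb
      · rw [hx, e8]; exact fun h => hBr h.symm
      · rw [e4, e8, hb3]; exact fun h => hBb h.symm
    · by_cases hx2 : c m = blue
      · -- (m, n₁, n₁+q) : blue, A, red
        refine ⟨m, q, by omega, by omega, by omega, ?_, ?_, ?_⟩
        · rw [hx2, e1]; exact fun h => hAb h.symm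
        · have e2 : m + 2 * q = n₁ + q := by omega
          rw [hx2, e2, hr1]; exact fun h => hrb h.symm
        · have e2 : m + 2 * q = n₁ + q := by omega
          rw [e1, e2, hr1]; exact hAr
      · -- (m, n₁+2q, n₁+5q) : x, red, blue
        refine ⟨m, 3 * q, by omega, by omega, by omega, ?_, ?_, ?_⟩
        · rw [e3, hr2]; exact hx
        · rw [e6, hb5]; exact hx2
        · rw [e3, e6, hr2, hb5]; exact hrb
  · -- extend to the right: t = n₁ + 8q ≤ n
    have ht : n₁ + 8 * q ≤ n := by omega
    by_cases hx : c (n₁ + 8 * q) = blue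
    · -- (n₁, n₁+4q, n₁+8q) : A, red, blue
      refine ⟨n₁, 4 * q, by omega, by omega, ?_, ?_, ?_, ?_⟩
      · omega
      · rw [show n₁ + 4 * q = n₁ + 4 * q from rfl, hr4]; exact hAr
      · rw [show n₁ + 2 * (4 * q) = n₁ + 8 * q by ring, hx]; exact hAb
      · rw [hr4, show n₁ + 2 * (4 * q) = n₁ + 8 * q by ring, hx]; exact hrb
    · by_cases hx2 : c (n₁ + 8 * q) = red
      · -- (n₁+6q, n₁+7q, n₁+8q) : blue, B, red
        refine ⟨n₁ + 6 * q, q, by omega, by omega, ?_, ?_, ?_, ?_⟩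
        · omega
        · rw [show n₁ + 6 * q + q = n₁ + 7 * q by ring, hb6]; exact fun h => hBb h.symm
        · rw [show n₁ + 6 * q + 2 * q = n₁ + 8 * q by ring, hb6, hx2]; exact fun h => hrb h.symm
        · rw [show n₁ + 6 * q + q = n₁ + 7 * q by ring, show n₁ + 6 * q + 2 * q = n₁ + 8 * q by ring, hx2]
          exact hBr
      · -- (n₁+2q, n₁+5q, n₁+8q) : red, blue, x
        refine ⟨n₁ + 2 * q, 3 * q, by omega, by omega, ?_, ?_, ?_, ?_⟩
        · omega
        · rw [show n₁ + 2 * q + 3 * q = n₁ + 5 * q by ring, hr2, hb5]; exact hrb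
        · rw [show n₁ + 2 * q + 2 * (3 * q) = n₁ + 8 * q by ring, hr2]
          exact fun h => hx2 h.symm
        · rw [show n₁ + 2 * q + 3 * q = n₁ + 5 * q by ring,
              show n₁ + 2 * q + 2 * (3 * q) = n₁ + 8 * q by ring, hb5]
          exact fun h => hx h.symm
end
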